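/- Let δ > 0 and δ_k = δ/2^k for k ≥ 0. For each k let v_k : ℕ_0^n → [0,∞) satisfy v_k(m+e_i) − v_k(m) ≥ a_i p_i δ_k for every i and v_k(m+1) − v_k(m) ≤ v_k(m)(e^{(c+λ)δ_k} − 1) for every m, and let V_k(x) := v_k(ρ^{δ_k}(x)) + a·(x − ⟨x⟩^{δ_k}). Assume V_k ≤ V_{k+1} pointwise on ℝ_+^n and that V̄(x) := lim_{k→∞} V_k(x) is finite for every x. Then V_k converges to V̄ uniformly on every compact subset of ℝ_+^n. -/

import Mathlib

open MeasureTheory Filter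

noncomputable section

private lemma mono_of_single_le {n : ℕ} (f : (Fin n → ℕ) → ℝ)
    (h : ∀ m i, f m ≤ f (m + Pi.single i 1)) : Monotone f := by
  have key : ∀ s (d m : Fin n → ℕ), ∑ i, d i = s → f m ≤ f (m + d) := by
    intro s
    induction s with
    | zero =>
      intro d m hd
      have hd0 : d = 0 := by
        funext i
        exact Finset.sum_eq_zero_iff.mp hd i (Finset.mem_univ i)
      simp [hd0]
    | succ s ih =>
      intro d m hd
      have hex : ∃ i, d i ≠ 0 := by
        by_contra hcon
        push_neg at hcon
        simp [hcon] at hd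
      obtain ⟨i, hi⟩ := hex
      set d' := Function.update d i (d i - 1) with hd'
      have hdd : d = d' + Pi.single i 1 := by
        funext j
        by_cases hj : j = i
        · subst hj
          simp [hd', Nat.sub_add_cancel (Nat.one_le_iff_ne_zero.2 hi)]
        · simp [hd', Function.update_of_ne hj, Pi.single_eq_of_ne hj]
      have hsum : ∑ j, d' j = s := by
        set S := ∑ j ∈ Finset.univ \ {i}, d j with hS
        have h1 : ∑ j, d' j = (d i - 1) + S := by
          rw [hd']; exact Finset.sum_update_of_mem (Finset.mem_univ i) d (d i - 1)
        have h2 : d i + S = s + 1 := by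
          rw [Finset.sum_eq_add_sum_sdiff_singleton_of_mem (Finset.mem_univ i) d] at hd
          exact hd
        omega
      calc f m ≤ f (m + Pi.single i 1) := h m i
        _ ≤ f ((m + Pi.single i 1) + d') := ih d' _ hsum
        _ = f (m + d) := by
            congr 1; funext j; rw [hdd]; simp [Pi.add_apply]; omega
  intro m m' hmm
  have hk := key (∑ i, (m' - m) i) (m' - m) m rfl
  have heq : m + (m' - m) = m' := by
    funext i; exact Nat.add_sub_cancel' (hmm i)
  rwa [heq] at hk

private lemma nat_floor_add_le' (u w : ℝ) (hu : 0 ≤ u) (hw : 0 ≤ w) :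
    ⌊u + w⌋₊ ≤ ⌊u⌋₊ + ⌊w⌋₊ + 1 := by
  have h1 : u < ⌊u⌋₊ + 1 := Nat.lt_floor_add_one u
  have h2 : w < ⌊w⌋₊ + 1 := Nat.lt_floor_add_one w
  have h3 : u + w < ((⌊u⌋₊ + ⌊w⌋₊ + 2 : ℕ) : ℝ) := by push_cast; linarith
  have h4 := (Nat.floor_lt (by linarith : (0:ℝ) ≤ u + w)).mpr h3
  omega

/-- The grid point associated with a multi-index `m`: `g^δ(m) = (p₁ δ m₁, …, pₙ δ mₙ)`. -/
def gdel (n : ℕ) (p : Fin n → ℝ) (δ : ℝ) (m : Fin n → ℕ) : Fin n → ℝ :=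
  fun i => p i * δ * (m i : ℝ)

/-- The index of the closest grid point below `x`: `ρ^δ(x) = (⌊xᵢ/(δ pᵢ)⌋)ᵢ`. -/
def rho (n : ℕ) (p : Fin n → ℝ) (δ : ℝ) (x : Fin n → ℝ) : Fin n → ℕ :=
  fun i => ⌊x i / (δ * p i)⌋₊

/-- The closest grid point below `x`: `⟨x⟩^δ = g^δ(ρ^δ(x))`. -/
def proj (n : ℕ) (p : Fin n → ℝ) (δ : ℝ) (x : Fin n → ℝ) : Fin n → ℝ :=
  gdel n p δ (rho n p δ x)

/-- The extension `V(x) = v(ρ^δ(x)) + a·(x − ⟨x⟩^δ)` of a grid function `v`. -/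
def Vext (n : ℕ) (p a : Fin n → ℝ) (δ : ℝ) (v : (Fin n → ℕ) → ℝ) (x : Fin n → ℝ) : ℝ :=
  v (rho n p δ x) + ∑ i, a i * (x i - proj n p δ x i)

set_option maxHeartbeats 1000000 in
/-- the embedded-grid extensions converge to `V̄` uniformly on compact
subsets of `ℝ₊ⁿ`. -/
theorem stmt10 (n : ℕ) (hn : 1 ≤ n) (p a : Fin n → ℝ)
    (hp : ∀ i, 0 < p i) (ha : ∀ i, 0 < a i)
    (c lam δ : ℝ) (hc : 0 < c) (hlam : 0 < lam) (hδ : 0 < δ)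
    (v : ℕ → (Fin n → ℕ) → ℝ) (hv0 : ∀ k m, 0 ≤ v k m)
    (hv1 : ∀ (k : ℕ) (m : Fin n → ℕ) (i : Fin n),
      a i * p i * (δ / 2 ^ k) ≤ v k (m + Pi.single i 1) - v k m)
    (hv2 : ∀ (k : ℕ) (m : Fin n → ℕ),
      v k (m + 1) - v k m ≤ v k m * (Real.exp ((c + lam) * (δ / 2 ^ k)) - 1))
    (hmono : ∀ x : Fin n → ℝ, 0 ≤ x → ∀ k,
      Vext n p a (δ / 2 ^ k) (v k) x ≤ Vext n p a (δ / 2 ^ (k + 1)) (v (k + 1)) x)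
    (Vbar : (Fin n → ℝ) → ℝ)
    (hlim : ∀ x : Fin n → ℝ, 0 ≤ x →
      Tendsto (fun k => Vext n p a (δ / 2 ^ k) (v k) x) atTop (nhds (Vbar x))) :
    ∀ K : Set (Fin n → ℝ), K ⊆ {x | 0 ≤ x} → IsCompact K →
      TendstoUniformlyOn (fun k => Vext n p a (δ / 2 ^ k) (v k)) Vbar atTop K := by
  intro K hKpos hK
  classical
  have hC : (0:ℝ) < c + lam := by positivity
  have hdkpos : ∀ k : ℕ, (0:ℝ) < δ / 2 ^ k := fun k => by positivity
  set F := fun k => Vext n p a (δ / 2 ^ k) (v k) with hFdef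
  have hmono' : ∀ x : Fin n → ℝ, 0 ≤ x → ∀ k, F k x ≤ F (k+1) x := by
    simpa only [hFdef] using hmono
  have hlim' : ∀ x : Fin n → ℝ, 0 ≤ x →
      Tendsto (fun k => F k x) atTop (nhds (Vbar x)) := by
    simpa only [hFdef] using hlim
  -- decomposition of F
  have hdecomp : ∀ (k : ℕ) (x : Fin n → ℝ),
      F k x = (v k (rho n p (δ / 2 ^ k) x)
        - ∑ i, a i * p i * (δ / 2 ^ k) * ((rho n p (δ / 2 ^ k) x i : ℕ) : ℝ))
        + ∑ i, a i * x i := by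
    intro k x
    simp only [hFdef, Vext, proj, gdel]
    have he : ∀ i : Fin n, a i * (x i - p i * (δ / 2 ^ k) * ((rho n p (δ / 2 ^ k) x i : ℕ) : ℝ))
        = a i * x i - a i * p i * (δ / 2 ^ k) * ((rho n p (δ / 2 ^ k) x i : ℕ) : ℝ) :=
      fun i => by ring
    rw [Finset.sum_congr rfl (fun i _ => he i), Finset.sum_sub_distrib]
    ring
  -- rho is monotone
  have hrho_mono : ∀ (d : ℝ), 0 < d → ∀ (x y : Fin n → ℝ), x ≤ y →
      rho n p d x ≤ rho n p d y := by
    intro d hd x y hxy i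
    apply Nat.floor_le_floor
    exact div_le_div_of_nonneg_right (hxy i) (mul_pos hd (hp i)).le
  -- G is monotone
  have hG : ∀ k : ℕ, Monotone (fun m : Fin n → ℕ =>
      v k m - ∑ i, a i * p i * (δ / 2 ^ k) * (m i : ℝ)) := by
    intro k
    apply mono_of_single_le
    intro m i
    have hstep := hv1 k m i
    have hsum : ∑ j, a j * p j * (δ / 2 ^ k) * (((m + Pi.single i 1 : Fin n → ℕ) j : ℕ) : ℝ)
        = (∑ j, a j * p j * (δ / 2 ^ k) * ((m j : ℕ) : ℝ)) + a i * p i * (δ / 2 ^ k) := by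
      have he : ∀ j : Fin n, a j * p j * (δ / 2 ^ k) * (((m + Pi.single i 1 : Fin n → ℕ) j : ℕ) : ℝ)
          = a j * p j * (δ / 2 ^ k) * ((m j : ℕ) : ℝ)
            + a j * p j * (δ / 2 ^ k) * (((Pi.single i 1 : Fin n → ℕ) j : ℕ) : ℝ) := by
        intro j
        simp only [Pi.add_apply]
        push_cast
        ring
      rw [Finset.sum_congr rfl (fun j _ => he j), Finset.sum_add_distrib]
      congr 1
      rw [Finset.sum_eq_single i (fun j _ hj => by simp [Pi.single_eq_of_ne hj])
        (fun hni => absurd (Finset.mem_univ i) hni)]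
      simp
    rw [hsum]
    linarith
  -- v is monotone
  have hvmono : ∀ k, Monotone (v k) := by
    intro k
    apply mono_of_single_le
    intro m i
    have h1 := hv1 k m i
    have h2 : 0 ≤ a i * p i * (δ / 2 ^ k) := mul_nonneg (mul_nonneg (ha i).le (hp i).le) (hdkpos k).le
    linarith
  -- F is monotone in x
  have hFmono : ∀ k (x y : Fin n → ℝ), x ≤ y → F k x ≤ F k y := by
    intro k x y hxy
    rw [hdecomp, hdecomp]
    have h1 := hG k (hrho_mono _ (hdkpos k) x y hxy)
    simp only at h1
    have h2 : ∑ i, a i * x i ≤ ∑ i, a i * y i :=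
      Finset.sum_le_sum fun i _ => mul_le_mul_of_nonneg_left (hxy i) (ha i).le
    linarith
  -- projection is below x
  have hfrac : ∀ (d : ℝ), 0 < d → ∀ (x : Fin n → ℝ), 0 ≤ x → ∀ i,
      p i * d * ((rho n p d x i : ℕ) : ℝ) ≤ x i := by
    intro d hd x hx i
    have h1 : ((rho n p d x i : ℕ) : ℝ) ≤ x i / (d * p i) :=
      Nat.floor_le (div_nonneg (hx i) (mul_pos hd (hp i)).le)
    have hpne : p i ≠ 0 := (hp i).ne'
    have hdne : d ≠ 0 := hd.ne'
    calc p i * d * ((rho n p d x i : ℕ) : ℝ) ≤ p i * d * (x i / (d * p i)) := by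
          apply mul_le_mul_of_nonneg_left h1 (mul_pos (hp i) hd).le
      _ = x i := by field_simp
  have hlin : ∀ k (x : Fin n → ℝ), 0 ≤ x →
      v k (rho n p (δ / 2 ^ k) x) ≤ F k x := by
    intro k x hx
    simp only [hFdef, Vext]
    have h1 : 0 ≤ ∑ i, a i * (x i - proj n p (δ / 2 ^ k) x i) := by
      apply Finset.sum_nonneg
      intro i _
      apply mul_nonneg (ha i).le
      have := hfrac _ (hdkpos k) x hx i
      simp only [proj, gdel]
      linarith
    linarith
  have hFnonneg : ∀ k (x : Fin n → ℝ), 0 ≤ x → 0 ≤ F k x :=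
    fun k x hx => le_trans (hv0 k _) (hlin k x hx)
  have hmonoK : ∀ (x : Fin n → ℝ), 0 ≤ x → Monotone (fun k => F k x) := fun x hx =>
    monotone_nat_of_le_succ fun k => hmono' x hx k
  have hFleV : ∀ k (x : Fin n → ℝ), 0 ≤ x → F k x ≤ Vbar x := fun k x hx =>
    (hmonoK x hx).ge_of_tendsto (hlim' x hx) k
  have hVmono : ∀ (x y : Fin n → ℝ), 0 ≤ x → x ≤ y → Vbar x ≤ Vbar y := by
    intro x y hx hxy
    exact le_of_tendsto_of_tendsto' (hlim' x hx) (hlim' y (le_trans hx hxy))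
      (fun k => hFmono k x y hxy)
  have hVnonneg : ∀ (x : Fin n → ℝ), 0 ≤ x → 0 ≤ Vbar x := fun x hx =>
    le_trans (hFnonneg 0 x hx) (hFleV 0 x hx)
  -- growth estimate
  have hgrow : ∀ k (m : Fin n → ℕ) (r : ℕ),
      v k (m + r • (1 : Fin n → ℕ)) ≤ v k m * Real.exp ((c + lam) * (δ / 2 ^ k) * r) := by
    intro k m r
    induction r with
    | zero => simp
    | succ r ih =>
      have h1 : m + (r+1) • (1 : Fin n → ℕ) = (m + r • 1) + 1 := by
        funext j
        simp only [Pi.add_apply, Pi.smul_apply, Pi.one_apply, smul_eq_mul, mul_one]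
        omega
      rw [h1]
      have h2 := hv2 k (m + r • 1)
      have hre : v k (m + r • 1) * (Real.exp ((c + lam) * (δ / 2 ^ k)) - 1)
          = v k (m + r • 1) * Real.exp ((c + lam) * (δ / 2 ^ k)) - v k (m + r • 1) := by ring
      have h3 : v k ((m + r • 1) + 1) ≤ v k (m + r • 1) * Real.exp ((c + lam) * (δ / 2 ^ k)) := by
        rw [hre] at h2; linarith
      calc v k ((m + r • 1) + 1)
          ≤ v k (m + r • 1) * Real.exp ((c + lam) * (δ / 2 ^ k)) := h3
        _ ≤ (v k m * Real.exp ((c + lam) * (δ / 2 ^ k) * r))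
              * Real.exp ((c + lam) * (δ / 2 ^ k)) :=
            mul_le_mul_of_nonneg_right ih (Real.exp_nonneg _)
        _ = v k m * Real.exp ((c + lam) * (δ / 2 ^ k) * ((r : ℕ) + 1 : ℕ)) := by
            rw [mul_assoc, ← Real.exp_add]
            congr 2
            push_cast
            ring
  -- minimum premium
  obtain ⟨i0, -, hi0⟩ := Finset.exists_min_image Finset.univ p
    ⟨⟨0, hn⟩, Finset.mem_univ _⟩
  have hpm : 0 < p i0 := hp i0
  have hpm' : ∀ i, p i0 ≤ p i := fun i => hi0 i (Finset.mem_univ i)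
  set pm := p i0 with hpmdef
  -- modulus of continuity
  have hmod : ∀ (k : ℕ) (h : ℝ), 0 < h → ∀ (x : Fin n → ℝ), 0 ≤ x →
      F k (fun i => x i + h) - F k x ≤
        v k (rho n p (δ / 2 ^ k) x) * (Real.exp ((c + lam) * (h / pm + δ / 2 ^ k)) - 1)
          + h * ∑ i, a i := by
    intro k h hh x hx
    have hdpos : 0 < δ / 2 ^ k := hdkpos k
    set r := ⌊h / ((δ / 2 ^ k) * pm)⌋₊ + 1 with hr
    have hρ : rho n p (δ / 2 ^ k) (fun i => x i + h)
        ≤ rho n p (δ / 2 ^ k) x + r • (1 : Fin n → ℕ) := by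
      intro i
      have hxi : 0 ≤ x i / ((δ / 2 ^ k) * p i) := div_nonneg (hx i) (mul_pos (hdkpos k) (hp i)).le
      have hhi : 0 ≤ h / ((δ / 2 ^ k) * p i) := div_nonneg hh.le (mul_pos (hdkpos k) (hp i)).le
      have e1 : (x i + h) / ((δ / 2 ^ k) * p i)
          = x i / ((δ / 2 ^ k) * p i) + h / ((δ / 2 ^ k) * p i) := add_div _ _ _
      have e2 : ⌊(x i + h) / ((δ / 2 ^ k) * p i)⌋₊
          ≤ ⌊x i / ((δ / 2 ^ k) * p i)⌋₊ + ⌊h / ((δ / 2 ^ k) * p i)⌋₊ + 1 := by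
        rw [e1]; exact nat_floor_add_le' _ _ hxi hhi
      have e3 : ⌊h / ((δ / 2 ^ k) * p i)⌋₊ ≤ ⌊h / ((δ / 2 ^ k) * pm)⌋₊ := by
        apply Nat.floor_le_floor
        apply div_le_div_of_nonneg_left hh.le (mul_pos (hdkpos k) hpm)
        exact mul_le_mul_of_nonneg_left (hpm' i) (hdkpos k).le
      simp only [rho, Pi.add_apply, Pi.smul_apply, Pi.one_apply, smul_eq_mul, mul_one]
      omega
    have hv_up : v k (rho n p (δ / 2 ^ k) (fun i => x i + h)) ≤
        v k (rho n p (δ / 2 ^ k) x) * Real.exp ((c + lam) * (h / pm + δ / 2 ^ k)) := by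
      calc v k (rho n p (δ / 2 ^ k) (fun i => x i + h))
          ≤ v k (rho n p (δ / 2 ^ k) x + r • 1) := hvmono k hρ
        _ ≤ v k (rho n p (δ / 2 ^ k) x) * Real.exp ((c + lam) * (δ / 2 ^ k) * r) :=
            hgrow k _ r
        _ ≤ v k (rho n p (δ / 2 ^ k) x) * Real.exp ((c + lam) * (h / pm + δ / 2 ^ k)) := by
            apply mul_le_mul_of_nonneg_left _ (hv0 k _)
            apply Real.exp_le_exp.mpr
            have h1 : (r : ℝ) = (⌊h / ((δ / 2 ^ k) * pm)⌋₊ : ℝ) + 1 := by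
              rw [hr]; push_cast; ring
            have h2 : (⌊h / ((δ / 2 ^ k) * pm)⌋₊ : ℝ) ≤ h / ((δ / 2 ^ k) * pm) :=
              Nat.floor_le (div_nonneg hh.le (by positivity))
            have h3 : (δ / 2 ^ k) * (h / ((δ / 2 ^ k) * pm)) = h / pm := by
              have hδne : δ ≠ 0 := hδ.ne'
              have hpmne : pm ≠ 0 := hpm.ne'
              have h2ne : ((2:ℝ) ^ k) ≠ 0 := by positivity
              field_simp
            have h4 : (δ / 2 ^ k) * (r : ℝ) ≤ h / pm + δ / 2 ^ k := by
              rw [h1]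
              nlinarith [mul_le_mul_of_nonneg_left h2 hdpos.le, h3]
            calc (c + lam) * (δ / 2 ^ k) * (r : ℝ)
                = (c + lam) * ((δ / 2 ^ k) * (r : ℝ)) := by ring
              _ ≤ (c + lam) * (h / pm + δ / 2 ^ k) := mul_le_mul_of_nonneg_left h4 hC.le
    have e4 := hdecomp k (fun i => x i + h)
    have e5 := hdecomp k x
    have hsumρ : ∑ i, a i * p i * (δ / 2 ^ k) * ((rho n p (δ / 2 ^ k) x i : ℕ) : ℝ)
        ≤ ∑ i, a i * p i * (δ / 2 ^ k)
            * ((rho n p (δ / 2 ^ k) (fun i => x i + h) i : ℕ) : ℝ) := by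
      apply Finset.sum_le_sum
      intro i _
      have hle : rho n p (δ / 2 ^ k) x i ≤ rho n p (δ / 2 ^ k) (fun i => x i + h) i :=
        hrho_mono _ hdpos x _ (fun i => le_add_of_nonneg_right hh.le) i
      exact mul_le_mul_of_nonneg_left (Nat.cast_le.mpr hle) (mul_nonneg (mul_nonneg (ha i).le (hp i).le) (hdkpos k).le)
    have hsa : ∑ i, a i * (x i + h) = (∑ i, a i * x i) + h * (∑ i, a i) := by
      have he : ∀ i : Fin n, a i * (x i + h) = a i * x i + h * a i := fun i => by ring
      rw [Finset.sum_congr rfl (fun i _ => he i), Finset.sum_add_distrib, ← Finset.mul_sum]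
    rw [e4, e5, hsa]
    have hre : v k (rho n p (δ / 2 ^ k) x)
        * (Real.exp ((c + lam) * (h / pm + δ / 2 ^ k)) - 1)
        = v k (rho n p (δ / 2 ^ k) x) * Real.exp ((c + lam) * (h / pm + δ / 2 ^ k))
          - v k (rho n p (δ / 2 ^ k) x) := by ring
    rw [hre]
    linarith [hv_up, hsumρ]
  -- bound on K
  obtain ⟨R, hRb⟩ := hK.isBounded.subset_closedBall 0
  obtain ⟨M, hMnn, hxM⟩ : ∃ M : ℝ, 0 ≤ M ∧ ∀ x ∈ K, ∀ i, x i ≤ M := by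
    refine ⟨max R 0, le_max_right _ _, ?_⟩
    intro x hx i
    have h1 : ‖x‖ ≤ R := by
      have := hRb hx
      rwa [Metric.mem_closedBall, dist_zero_right] at this
    have h2 : x i ≤ R := by
      calc x i ≤ |x i| := le_abs_self _
        _ = ‖x i‖ := rfl
        _ ≤ ‖x‖ := norm_le_pi_norm x i
        _ ≤ R := h1
    exact le_trans h2 (le_max_left _ _)
  obtain ⟨B, hBnn, hvBbound⟩ : ∃ B : ℝ, 0 ≤ B ∧
      ∀ k (y : Fin n → ℝ), 0 ≤ y → (∀ i, y i ≤ M) → v k (rho n p (δ / 2 ^ k) y) ≤ B := by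
    refine ⟨Vbar (fun _ => M), hVnonneg _ (fun i => hMnn), ?_⟩
    intro k y hy hyM
    calc v k (rho n p (δ / 2 ^ k) y) ≤ F k y := hlin k _ hy
      _ ≤ Vbar y := hFleV k _ hy
      _ ≤ Vbar (fun _ => M) := hVmono _ _ hy (fun i => hyM i)
  obtain ⟨A, hAnn, hmodA⟩ : ∃ A : ℝ, 0 ≤ A ∧
      ∀ (k : ℕ) (h : ℝ), 0 < h → ∀ (x : Fin n → ℝ), 0 ≤ x →
        F k (fun i => x i + h) - F k x ≤
          v k (rho n p (δ / 2 ^ k) x)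
            * (Real.exp ((c + lam) * (h / pm + δ / 2 ^ k)) - 1) + h * A :=
    ⟨∑ i, a i, Finset.sum_nonneg fun i _ => (ha i).le, hmod⟩
  rw [Metric.tendstoUniformlyOn_iff]
  intro ε hε
  -- choose t0
  have hcont : Tendsto (fun t : ℝ => B * (Real.exp ((c + lam) * t) - 1)) (nhds 0) (nhds 0) := by
    have hcc : Continuous fun t : ℝ => B * (Real.exp ((c + lam) * t) - 1) :=
      continuous_const.mul ((Real.continuous_exp.comp
        (continuous_const.mul continuous_id)).sub continuous_const)
    have h0 := hcc.tendsto 0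
    simpa using h0
  have hev : ∀ᶠ t in nhdsWithin (0:ℝ) (Set.Ioi 0),
      B * (Real.exp ((c + lam) * t) - 1) < ε / 6 :=
    eventually_nhdsWithin_of_eventually_nhds (hcont.eventually (gt_mem_nhds (by linarith)))
  obtain ⟨t0, ht0B, ht0mem⟩ := (hev.and eventually_mem_nhdsWithin).exists
  have ht0 : 0 < t0 := ht0mem
  -- choose h0
  obtain ⟨h0, hh0pos, hh0a, hh0b⟩ : ∃ h0 : ℝ, 0 < h0 ∧ h0 / pm ≤ t0 / 2 ∧ h0 * A < ε / 6 := by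
    refine ⟨min (t0 * pm / 2) (min (ε / (6 * (A + 1))) 1),
      lt_min (by positivity) (lt_min (by positivity) one_pos), ?_, ?_⟩
    · have h1 : min (t0 * pm / 2) (min (ε / (6 * (A + 1))) 1) ≤ t0 * pm / 2 := min_le_left _ _
      rw [div_le_div_iff₀ hpm two_pos]
      nlinarith
    · have h1 : min (t0 * pm / 2) (min (ε / (6 * (A + 1))) 1) ≤ ε / (6 * (A + 1)) :=
        le_trans (min_le_right _ _) (min_le_left _ _)
      have h2 : min (t0 * pm / 2) (min (ε / (6 * (A + 1))) 1) * A
          ≤ ε / (6 * (A + 1)) * A := mul_le_mul_of_nonneg_right h1 hAnn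
      have h3 : ε / (6 * (A + 1)) * A < ε / 6 := by
        rw [div_mul_eq_mul_div, div_lt_div_iff₀ (by positivity) (by positivity)]
        nlinarith
      linarith
  -- choose k1
  obtain ⟨k1, hk1⟩ := pow_unbounded_of_one_lt (δ / (t0 / 2)) (one_lt_two (α := ℝ))
  have hdk_small : ∀ k, k1 ≤ k → δ / 2 ^ k < t0 / 2 := by
    intro k hk
    have h1 : (2:ℝ) ^ k1 ≤ 2 ^ k := pow_le_pow_right₀ one_le_two hk
    have h2 : δ / (t0 / 2) < 2 ^ k := lt_of_lt_of_le hk1 h1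
    rw [div_lt_iff₀ (by positivity : (0:ℝ) < t0 / 2)] at h2
    rw [div_lt_iff₀ (by positivity : (0:ℝ) < (2:ℝ) ^ k)]
    nlinarith
  -- grid
  obtain ⟨N, hN⟩ : ∃ N : ℕ, N = ⌊M / h0⌋₊ + 1 := ⟨_, rfl⟩
  obtain ⟨z, hzval⟩ : ∃ z : (Fin n → ℕ) → Fin n → ℝ,
      ∀ j i, z j i = h0 * ((j i : ℕ) : ℝ) := ⟨_, fun _ _ => rfl⟩
  have hznn : ∀ j, (0:Fin n → ℝ) ≤ z j := by
    intro j i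
    rw [hzval]
    positivity
  have hpt : ∀ j : Fin n → ℕ, ∃ N0 : ℕ, ∀ k, N0 ≤ k → Vbar (z j) - F k (z j) < ε / 3 := by
    intro j
    obtain ⟨N0, hN0⟩ := Metric.tendsto_atTop.mp (hlim' (z j) (hznn j)) (ε / 3) (by linarith)
    refine ⟨N0, fun k hk => ?_⟩
    have h1 := hN0 k hk
    rw [Real.dist_eq] at h1
    calc Vbar (z j) - F k (z j) ≤ |Vbar (z j) - F k (z j)| := le_abs_self _
      _ = |F k (z j) - Vbar (z j)| := abs_sub_comm _ _
      _ < ε / 3 := h1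
  choose Kf hKf using hpt
  obtain ⟨k2, hk2⟩ : ∃ k2 : ℕ, ∀ j : Fin n → ℕ,
      j ∈ Fintype.piFinset (fun _ : Fin n => Finset.range (N + 1)) → Kf j ≤ k2 :=
    ⟨(Fintype.piFinset (fun _ : Fin n => Finset.range (N + 1))).sup Kf,
      fun j hj => Finset.le_sup hj⟩
  filter_upwards [eventually_ge_atTop (max k1 k2)] with k hk
  intro x hxK
  have hk1' : k1 ≤ k := le_trans (le_max_left _ _) hk
  have hk2' : k2 ≤ k := le_trans (le_max_right _ _) hk
  have hx0 : (0:Fin n → ℝ) ≤ x := hKpos hxK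
  obtain ⟨j, hj⟩ : ∃ j : Fin n → ℕ, ∀ i, j i = ⌊x i / h0⌋₊ := ⟨_, fun _ => rfl⟩
  have hjS : ∀ i, j i + 1 ≤ N := by
    intro i
    have h1 : ⌊x i / h0⌋₊ ≤ ⌊M / h0⌋₊ :=
      Nat.floor_le_floor (div_le_div_of_nonneg_right (hxM x hxK i) hh0pos.le)
    rw [hj i, hN]
    omega
  have hj1S : (j + 1) ∈ Fintype.piFinset (fun _ : Fin n => Finset.range (N + 1)) := by
    rw [Fintype.mem_piFinset]
    intro i
    rw [Finset.mem_range]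
    have h1 := hjS i
    have h2 : (j + 1) i = j i + 1 := rfl
    omega
  have hzplus : z (j + 1) = fun i => z j i + h0 := by
    funext i
    rw [hzval, hzval]
    have h2 : (j + 1) i = j i + 1 := rfl
    rw [h2]
    push_cast
    ring
  have hzlex : z j ≤ x := by
    intro i
    have h1 : ((j i : ℕ) : ℝ) ≤ x i / h0 := by
      rw [hj i]
      exact Nat.floor_le (div_nonneg (hx0 i) hh0pos.le)
    have h2 : h0 * ((j i : ℕ) : ℝ) ≤ h0 * (x i / h0) :=
      mul_le_mul_of_nonneg_left h1 hh0pos.le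
    have h3 : h0 * (x i / h0) = x i := by field_simp
    rw [hzval]
    linarith
  have hxlez : x ≤ z (j + 1) := by
    intro i
    have h1 : x i / h0 < ((j i : ℕ) : ℝ) + 1 := by
      rw [hj i]
      exact Nat.lt_floor_add_one _
    have h2 := (div_lt_iff₀ hh0pos).mp h1
    have h3 : z (j + 1) i = h0 * ((j i : ℕ) : ℝ) + h0 := by
      rw [hzval]
      have h4 : (j + 1) i = j i + 1 := rfl
      rw [h4]
      push_cast
      ring
    rw [h3]
    nlinarith
  have hvB : v k (rho n p (δ / 2 ^ k) (z j)) ≤ B :=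
    hvBbound k (z j) (hznn j) (fun i => le_trans (hzlex i) (hxM x hxK i))
  have hexp : Real.exp ((c + lam) * (h0 / pm + δ / 2 ^ k))
      ≤ Real.exp ((c + lam) * t0) := by
    apply Real.exp_le_exp.mpr
    have h1 := hdk_small k hk1'
    have h2 : h0 / pm + δ / 2 ^ k ≤ t0 := by linarith
    exact mul_le_mul_of_nonneg_left h2 hC.le
  have hone : (1:ℝ) ≤ Real.exp ((c + lam) * (h0 / pm + δ / 2 ^ k)) := by
    apply Real.one_le_exp
    have h1 : 0 ≤ h0 / pm := div_nonneg hh0pos.le hpm.le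
    have h2 : 0 ≤ δ / 2 ^ k := (hdkpos k).le
    exact mul_nonneg hC.le (by linarith)
  have hstep : F k (z (j + 1)) - F k (z j) < ε / 3 := by
    rw [hzplus]
    have hmod' := hmodA k h0 hh0pos (z j) (hznn j)
    have h1 : v k (rho n p (δ / 2 ^ k) (z j))
        * (Real.exp ((c + lam) * (h0 / pm + δ / 2 ^ k)) - 1)
        ≤ B * (Real.exp ((c + lam) * t0) - 1) :=
      mul_le_mul hvB (by linarith) (by linarith) hBnn
    calc F k (fun i => z j i + h0) - F k (z j)
        ≤ v k (rho n p (δ / 2 ^ k) (z j))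
            * (Real.exp ((c + lam) * (h0 / pm + δ / 2 ^ k)) - 1) + h0 * A := hmod'
      _ ≤ B * (Real.exp ((c + lam) * t0) - 1) + h0 * A := by linarith
      _ < ε / 6 + ε / 6 := add_lt_add ht0B hh0b
      _ ≤ ε / 3 := by linarith
  have hgrid : Vbar (z (j + 1)) - F k (z (j + 1)) < ε / 3 :=
    hKf (j + 1) k (le_trans (hk2 (j + 1) hj1S) hk2')
  have hfinal : Vbar x - F k x < ε := by
    have c1 : Vbar x ≤ Vbar (z (j + 1)) := hVmono x _ hx0 hxlez
    have c2 : F k (z j) ≤ F k x := hFmono k _ _ hzlex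
    linarith
  have hnn : 0 ≤ Vbar x - F k x := sub_nonneg.mpr (hFleV k x hx0)
  rw [Real.dist_eq, abs_of_nonneg hnn]
  exact hfinal

end
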